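/- Let U = (U₁, …, U_d) be a random vector with independent components, where U_i has density f_i(x) = a_i⁻¹ exp(x/a_i) on (−∞, 0) with a_i > 0 (reverse exponential). Then E[exp(max_{1≤i≤d} U_i)] = (Σ_{i=1}^d a_i⁻¹)/(1 + Σ_{i=1}^d a_i⁻¹). -/

import Mathlib

open Filter Topology MeasureTheory ProbabilityTheory
open scoped NNReal ENNReal

lemma integrableOn_exp_mul_Iic' {b : ℝ} (hb : 0 < b) (c : ℝ) :
    IntegrableOn (fun x => Real.exp (b * x)) (Set.Iic c) := by
  rw [show IntegrableOn (fun x => Real.exp (b * x)) (Set.Iic c) volume ↔ _ from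
    (integrable_indicator_iff measurableSet_Iic).symm]
  have : (Set.Iic c).indicator (fun x => Real.exp (b * x)) =
      fun x => (Set.Iic (b * c)).indicator Real.exp (b * x) := by
    ext x
    simp only [Set.indicator_apply, Set.mem_Iic, mul_le_mul_iff_right₀ hb]
  rw [this, MeasureTheory.integrable_comp_mul_left_iff _ hb.ne']
  exact (integrable_indicator_iff measurableSet_Iic).2 (integrableOn_exp_Iic _)

lemma integral_exp_mul_Iic' {b : ℝ} (hb : 0 < b) (c : ℝ) :
    ∫ x in Set.Iic c, b * Real.exp (b * x) = Real.exp (b * c) := by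
  have := integral_Iic_of_hasDerivAt_of_tendsto' (f := fun x => Real.exp (b * x))
    (f' := fun x => b * Real.exp (b * x)) (a := c) (m := 0)
    (fun x _ => by
      simpa [mul_comm, Function.comp_def] using ((Real.hasDerivAt_exp (b*x)).comp x ((hasDerivAt_id x).const_mul b)))
    ((integrableOn_exp_mul_Iic' hb c).const_mul b) ?_
  · simpa using this
  · have h : Tendsto (fun x => b * x) atBot atBot := (tendsto_const_mul_atBot_of_pos hb).2 tendsto_id
    exact Real.tendsto_exp_atBot.comp h

lemma nu_Iic' {a : ℝ} (ha : 0 < a) (x : ℝ) :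
    (volume.withDensity fun t => ENNReal.ofReal
        ((Set.Iio (0:ℝ)).indicator (fun t => a⁻¹ * Real.exp (t / a)) t)) (Set.Iic x)
      = ENNReal.ofReal (Real.exp (min x 0 / a)) := by
  have hb : (0:ℝ) < a⁻¹ := inv_pos.2 ha
  have hden : ∀ t : ℝ, (Set.Iio (0:ℝ)).indicator (fun t => a⁻¹ * Real.exp (t / a)) t
      = (Set.Iio (0:ℝ)).indicator (fun t => a⁻¹ * Real.exp (a⁻¹ * t)) t := by
    intro t; simp_rw [div_eq_inv_mul]
  simp_rw [hden]
  rw [withDensity_apply _ measurableSet_Iic]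
  have hint : IntegrableOn
      ((Set.Iio (0:ℝ)).indicator (fun t => a⁻¹ * Real.exp (a⁻¹ * t))) (Set.Iic x) :=
    (((integrableOn_exp_mul_Iic' hb x).const_mul a⁻¹)).indicator measurableSet_Iio
  have hnn : (0:ℝ → ℝ) ≤ᵐ[volume.restrict (Set.Iic x)]
      (Set.Iio (0:ℝ)).indicator (fun t => a⁻¹ * Real.exp (a⁻¹ * t)) :=
    Filter.Eventually.of_forall (Set.indicator_nonneg (fun t _ => by positivity))
  rw [← ofReal_integral_eq_lintegral_ofReal hint hnn]
  congr 1
  rw [MeasureTheory.integral_indicator measurableSet_Iio,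
    Measure.restrict_restrict measurableSet_Iio]
  have hset : Set.Iio (0:ℝ) ∩ Set.Iic x = Set.Iio 0 ∩ Set.Iic (min x 0) := by
    ext t; simp only [Set.mem_inter_iff, Set.mem_Iio, Set.mem_Iic, le_min_iff]
    constructor
    · rintro ⟨h1, h2⟩; exact ⟨h1, h2, h1.le⟩
    · rintro ⟨h1, h2, _⟩; exact ⟨h1, h2⟩
  rw [hset]
  have hae : (Set.Iio (0:ℝ) ∩ Set.Iic (min x 0) : Set ℝ) =ᵐ[volume]
      (Set.Iic (min x 0) : Set ℝ) := by
    have hsub : Set.Iic (min x 0) \ (Set.Iio (0:ℝ) ∩ Set.Iic (min x 0)) ⊆ {0} := by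
      rintro t ⟨ht, hnt⟩
      simp only [Set.mem_inter_iff, Set.mem_Iio, Set.mem_Iic, not_and] at hnt ht
      have h0 : ¬ t < 0 := fun h => hnt h ht
      have : t = 0 := le_antisymm (le_trans ht (min_le_right _ _)) (not_lt.1 h0)
      simp [this]
    refine ae_eq_set.2 ⟨?_, measure_mono_null hsub (by simp)⟩
    rw [Set.diff_eq_empty.2 Set.inter_subset_right]; simp
  rw [setIntegral_congr_set hae, integral_exp_mul_Iic' hb (min x 0), div_eq_inv_mul]

/-- If `U = (U₁, …, U_d)` is a random vector with independent
components, where `Uᵢ` has the reverse exponential density `x ↦ aᵢ⁻¹ exp(x/aᵢ)` on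
`(-∞, 0)` with `aᵢ > 0`, then `E[exp (maxᵢ Uᵢ)] = (Σᵢ aᵢ⁻¹) / (1 + Σᵢ aᵢ⁻¹)`. -/
theorem expectation_exp_max_reverse_exponential
    {d : ℕ} [NeZero d] (a : Fin d → ℝ) (ha : ∀ i, 0 < a i)
    {Ω : Type*} [MeasurableSpace Ω] (P : Measure Ω) [IsProbabilityMeasure P]
    (U : Fin d → Ω → ℝ)
    (hmeas : ∀ i, Measurable (U i))
    (hindep : iIndepFun U P)
    (hlaw : ∀ i, Measure.map (U i) P = volume.withDensity (fun x =>
      ENNReal.ofReal (Set.indicator (Set.Iio (0 : ℝ))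
        (fun x => (a i)⁻¹ * Real.exp (x / a i)) x))) :
    ∫ ω, Real.exp (⨆ i, U i ω) ∂P =
      (∑ i, (a i)⁻¹) / (1 + ∑ i, (a i)⁻¹) := by
  haveI : Nonempty (Fin d) := Fin.pos_iff_nonempty.1 (Nat.pos_of_ne_zero (NeZero.ne d))
  set s : ℝ := ∑ i, (a i)⁻¹ with hs_def
  have hs : 0 < s := Finset.sum_pos (fun i _ => inv_pos.2 (ha i)) Finset.univ_nonempty
  have hsinv : 0 < s⁻¹ := inv_pos.2 hs
  have hmax : Measurable fun ω => ⨆ i, U i ω := Measurable.iSup hmeas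
  set μ : Measure ℝ := volume.withDensity (fun t => ENNReal.ofReal
      ((Set.Iio (0:ℝ)).indicator (fun t => (s⁻¹)⁻¹ * Real.exp (t / s⁻¹)) t)) with hμ
  have hmap : Measure.map (fun ω => ⨆ i, U i ω) P = μ := by
    haveI : IsProbabilityMeasure (Measure.map (fun ω => ⨆ i, U i ω) P) :=
      Measure.isProbabilityMeasure_map hmax.aemeasurable
    refine Measure.ext_of_Iic _ _ (fun x => ?_)
    rw [Measure.map_apply hmax measurableSet_Iic]
    have hpre : (fun ω => ⨆ i, U i ω) ⁻¹' Set.Iic x = ⋂ i, U i ⁻¹' Set.Iic x := by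
      ext ω
      simp only [Set.mem_preimage, Set.mem_Iic, Set.mem_iInter]
      exact ciSup_le_iff (Set.Finite.bddAbove (Set.finite_range _))
    have hIndep := hindep.measure_inter_preimage_eq_mul Finset.univ
        (sets := fun _ => Set.Iic x) (fun i _ => measurableSet_Iic)
    rw [hpre, show (⋂ i, U i ⁻¹' Set.Iic x) = ⋂ i ∈ Finset.univ, U i ⁻¹' Set.Iic x by simp,
      hIndep]
    have hcomp : ∀ i, P (U i ⁻¹' Set.Iic x) = ENNReal.ofReal (Real.exp (min x 0 / a i)) := by
      intro i
      rw [← Measure.map_apply (hmeas i) measurableSet_Iic, hlaw i, nu_Iic' (ha i)]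
    simp_rw [hcomp]
    rw [hμ, nu_Iic' hsinv x,
      ← ENNReal.ofReal_prod_of_nonneg (fun i _ => (Real.exp_pos _).le), ← Real.exp_sum]
    congr 2
    simp_rw [div_eq_mul_inv, inv_inv, ← Finset.mul_sum, hs_def]
  have hμ2 : μ = volume.withDensity (fun t =>
      ((((Set.Iio (0:ℝ)).indicator (fun t => s * Real.exp (s * t)) t).toNNReal : ℝ≥0) : ℝ≥0∞)) := by
    rw [hμ]
    congr 1
    funext t
    rw [show (ENNReal.ofReal ((Set.Iio (0:ℝ)).indicator
        (fun t => (s⁻¹)⁻¹ * Real.exp (t / s⁻¹)) t)) =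
      ((((Set.Iio (0:ℝ)).indicator (fun t => (s⁻¹)⁻¹ * Real.exp (t / s⁻¹)) t).toNNReal : ℝ≥0)
        : ℝ≥0∞) from rfl]
    congr 2
    by_cases ht : t ∈ Set.Iio (0:ℝ)
    · rw [Set.indicator_of_mem ht, Set.indicator_of_mem ht, inv_inv]
      rw [show t / s⁻¹ = s * t by field_simp]
    · rw [Set.indicator_of_notMem ht, Set.indicator_of_notMem ht]
  have hmeasd : Measurable fun t : ℝ =>
      (((Set.Iio (0:ℝ)).indicator (fun t => s * Real.exp (s * t)) t).toNNReal : ℝ≥0) :=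
    measurable_real_toNNReal.comp
      (((measurable_const.mul ((Real.measurable_exp).comp
        (measurable_const_mul s))).indicator measurableSet_Iio))
  calc ∫ ω, Real.exp (⨆ i, U i ω) ∂P
      = ∫ x, Real.exp x ∂(Measure.map (fun ω => ⨆ i, U i ω) P) :=
        (integral_map hmax.aemeasurable Real.continuous_exp.aestronglyMeasurable).symm
    _ = ∫ x, Real.exp x ∂μ := by rw [hmap]
    _ = ∫ t, (((Set.Iio (0:ℝ)).indicator (fun t => s * Real.exp (s * t)) t).toNNReal : ℝ≥0)
          • Real.exp t := by
        rw [hμ2, integral_withDensity_eq_integral_smul hmeasd]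
    _ = ∫ t, (Set.Iio (0:ℝ)).indicator (fun t => s * Real.exp (s * t) * Real.exp t) t := by
        congr 1
        funext t
        rw [NNReal.smul_def, Real.coe_toNNReal _
          (Set.indicator_nonneg (fun t _ => by positivity) t)]
        by_cases ht : t ∈ Set.Iio (0:ℝ)
        · rw [Set.indicator_of_mem ht, Set.indicator_of_mem ht, smul_eq_mul]
        · rw [Set.indicator_of_notMem ht, Set.indicator_of_notMem ht, smul_eq_mul, zero_mul]
    _ = s / (1 + s) := by
        rw [MeasureTheory.integral_indicator measurableSet_Iio,
          setIntegral_congr_set Iio_ae_eq_Iic]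
        have hpt : ∀ t : ℝ, s * Real.exp (s * t) * Real.exp t
            = (s / (1 + s)) * ((1 + s) * Real.exp ((1 + s) * t)) := by
          intro t
          rw [mul_assoc, ← Real.exp_add, show s * t + t = (1 + s) * t by ring]
          field_simp
        simp_rw [hpt]
        rw [integral_const_mul, integral_exp_mul_Iic' (by positivity) 0]
        simp
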